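/- Let X be a Delone set in ℝ^d such that the additive subgroup [X] generated by X is free of finite rank s with ℤ-basis v₁,…,v_s, and suppose the associated address map φ : [X] → ℤ^s is globally Lipschitz on X, i.e. there is C₀ > 0 with ‖φ(x) − φ(x')‖ ≤ C₀‖x − x'‖ for all x, x' ∈ X. Then X is of finite type: (X − X) ∩ B(0,T) is finite for every T > 0. -/

import Mathlib

open scoped Pointwise

noncomputable section


open scoped Pointwise

noncomputable section

/-- `X` is uniformly discrete with parameter `r`: distinct points are at distance `≥ 2r`. -/
def UnifDiscrete {d : ℕ} (X : Set (EuclideanSpace ℝ (Fin d))) (r : ℝ) : Prop :=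
  ∀ x ∈ X, ∀ y ∈ X, x ≠ y → 2 * r ≤ dist x y

/-- `X` is relatively dense with parameter `R`: every closed ball of radius `R` meets `X`. -/
def RelDense {d : ℕ} (X : Set (EuclideanSpace ℝ (Fin d))) (R : ℝ) : Prop :=
  ∀ z : EuclideanSpace ℝ (Fin d), ∃ x ∈ X, dist z x ≤ R

/-- `X` is a Delone set. -/
def IsDelone {d : ℕ} (X : Set (EuclideanSpace ℝ (Fin d))) : Prop :=
  (∃ r > 0, UnifDiscrete X r) ∧ (∃ R > 0, RelDense X R)

/-- The address map associated to a free `ℤ`-basis of the subgroup `[X]` generated by `X`: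
it sends `Σᵢ nᵢ vᵢ` to the coordinate vector `(n₁,…,n_s)`, viewed in `ℝ^s`. -/
def address {d s : ℕ} {X : Set (EuclideanSpace ℝ (Fin d))}
    (b : Module.Basis (Fin s) ℤ (AddSubgroup.closure X)) (x : AddSubgroup.closure X) :
    EuclideanSpace ℝ (Fin s) := WithLp.toLp 2 (fun i => (b.repr x i : ℝ))

lemma euclid_coord_le_norm {s : ℕ} (x : EuclideanSpace ℝ (Fin s)) (i : Fin s) :
    |x i| ≤ ‖x‖ := by
  rw [EuclideanSpace.norm_eq]
  have h1 : |x i| = Real.sqrt (‖x i‖ ^ 2) := by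
    rw [Real.sqrt_sq_eq_abs]; simp [abs_abs, Real.norm_eq_abs]
  rw [h1]
  apply Real.sqrt_le_sqrt
  exact Finset.single_le_sum (fun j _ => sq_nonneg ‖x j‖) (Finset.mem_univ i)

/-- If the subgroup generated by a Delone set `X` is free of finite rank with a basis whose
associated address map is globally Lipschitz on `X`, then `X` is of finite type. -/
theorem address_lipschitz_finite_type {d s : ℕ} (X : Set (EuclideanSpace ℝ (Fin d)))
    (hX : IsDelone X) (b : Module.Basis (Fin s) ℤ (AddSubgroup.closure X))
    (C₀ : ℝ) (hC₀ : 0 < C₀)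
    (hlip : ∀ x (hx : x ∈ X) x' (hx' : x' ∈ X),
      ‖address b ⟨x, AddSubgroup.subset_closure hx⟩ -
        address b ⟨x', AddSubgroup.subset_closure hx'⟩‖ ≤ C₀ * ‖x - x'‖) :
    ∀ T > 0, ((X - X) ∩ Metric.ball 0 T).Finite := by
  intro T hT
  classical
  have hGdef : True := trivial
  set N : ℤ := ⌈C₀ * T⌉ with hN
  -- the coding function
  set f : EuclideanSpace ℝ (Fin d) → (Fin s → ℤ) :=
    fun v => if h : v ∈ AddSubgroup.closure X then (b.repr ⟨v, h⟩ : Fin s →₀ ℤ) else 0 with hf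
  have hmem : ∀ v ∈ (X - X) ∩ Metric.ball 0 T, v ∈ AddSubgroup.closure X := by
    rintro v ⟨⟨x, hx, x', hx', rfl⟩, _⟩
    exact sub_mem (AddSubgroup.subset_closure hx) (AddSubgroup.subset_closure hx')
  have hinj : Set.InjOn f ((X - X) ∩ Metric.ball 0 T) := by
    intro v hv w hw hvw
    have hv' := hmem v hv
    have hw' := hmem w hw
    rw [hf] at hvw
    simp only [hv', hw', dif_pos] at hvw
    have : b.repr ⟨v, hv'⟩ = b.repr ⟨w, hw'⟩ := by
      ext i; exact congrFun hvw i
    have := b.repr.injective this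
    exact congrArg Subtype.val this
  have himg : f '' ((X - X) ∩ Metric.ball 0 T) ⊆
      Set.pi Set.univ (fun _ : Fin s => Set.Icc (-N) N) := by
    rintro _ ⟨v, hv, rfl⟩
    obtain ⟨⟨x, hx, x', hx', rfl⟩, hball⟩ := hv
    intro i _
    have hvG : x - x' ∈ AddSubgroup.closure X :=
      sub_mem (AddSubgroup.subset_closure hx) (AddSubgroup.subset_closure hx')
    have hsub : (⟨x - x', hvG⟩ : AddSubgroup.closure X) =
        ⟨x, AddSubgroup.subset_closure hx⟩ - ⟨x', AddSubgroup.subset_closure hx'⟩ := rfl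
    have haddr : address b ⟨x - x', hvG⟩ =
        address b ⟨x, AddSubgroup.subset_closure hx⟩ -
          address b ⟨x', AddSubgroup.subset_closure hx'⟩ := by
      ext j
      simp only [address, hsub, map_sub, Finsupp.coe_sub, Pi.sub_apply, PiLp.sub_apply, PiLp.toLp_apply]
      push_cast
      rfl
    have hle : ‖address b ⟨x - x', hvG⟩‖ ≤ C₀ * ‖x - x'‖ := by
      rw [haddr]; exact hlip x hx x' hx'
    have hballn : ‖x - x'‖ < T := by
      simpa [Metric.mem_ball, dist_eq_norm] using hball
    have hle2 : ‖address b ⟨x - x', hvG⟩‖ ≤ C₀ * T :=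
      hle.trans (by nlinarith)
    have hcoord : |(b.repr ⟨x - x', hvG⟩ i : ℝ)| ≤ C₀ * T :=
      le_trans (euclid_coord_le_norm (address b ⟨x - x', hvG⟩) i) hle2
    have : |(b.repr ⟨x - x', hvG⟩ i : ℝ)| ≤ (N : ℝ) :=
      hcoord.trans (Int.le_ceil _)
    have habs : |b.repr ⟨x - x', hvG⟩ i| ≤ N := by exact_mod_cast this
    rw [hf]
    simp only [hvG, dif_pos]
    exact abs_le.mp habs
  have hfin : (Set.pi Set.univ (fun _ : Fin s => Set.Icc (-N) N)).Finite :=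
    Set.Finite.pi (fun _ => Set.finite_Icc _ _)
  exact Set.Finite.of_finite_image (hfin.subset himg) hinj
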